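/- Consider the two-phase ODE: E' = F₋(τ) for τ ∈ [t_b, t_c] and E' = ζF₋(τ)/(ζ − E) for τ ∈ [t_c, t_b+1], with ζ > 0 and E < 0 throughout. Then any solution satisfies the implicit Poincaré map E(t_b+1) − E(t_b+1)²/(2ζ) = E_b − E_c²/(2ζ) + ∫₀¹ F₋(τ)dτ, where E_b = E(t_b) and E_c = E_b + ∫_{t_b}^{t_c} F₋(τ)dτ. -/

import Mathlib

/-- Implicit Poincaré map for the two-phase perennially ice-covered dynamics. -/
theorem ice_covered_poincare (ζ tb tc : ℝ) (hζ : 0 < ζ) (F : ℝ → ℝ)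
    (hF : Continuous F) (hper : ∀ τ, F (τ + 1) = F τ)
    (h1 : tb < tc) (h2 : tc < tb + 1) (E : ℝ → ℝ)
    (hEcont : ContinuousOn E (Set.Icc tb (tb + 1)))
    (hneg : ∀ τ ∈ Set.Icc tb (tb + 1), E τ < 0)
    (hd1 : ∀ τ ∈ Set.Icc tb tc, HasDerivWithinAt E (F τ) (Set.Icc tb tc) τ)
    (hd2 : ∀ τ ∈ Set.Icc tc (tb + 1), ∃ d, HasDerivWithinAt E d (Set.Icc tc (tb + 1)) τ ∧
      (ζ - E τ) * d = ζ * F τ) :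
    E (tb + 1) - (E (tb + 1)) ^ 2 / (2 * ζ) =
      E tb - (E tb + ∫ τ in tb..tc, F τ) ^ 2 / (2 * ζ) + ∫ τ in (0:ℝ)..1, F τ := by
  have hζ' : ζ ≠ 0 := ne_of_gt hζ
  set G : ℝ → ℝ := fun τ => E τ - (E τ) ^ 2 / (2 * ζ) with hG
  have hsub1 : Set.Icc tb tc ⊆ Set.Icc tb (tb + 1) :=
    Set.Icc_subset_Icc le_rfl h2.le
  have hsub2 : Set.Icc tc (tb + 1) ⊆ Set.Icc tb (tb + 1) :=
    Set.Icc_subset_Icc h1.le le_rfl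
  -- Phase 1: integral of F on [tb, tc]
  have hA : (∫ τ in tb..tc, F τ) = E tc - E tb := by
    apply intervalIntegral.integral_eq_sub_of_hasDeriv_right_of_le h1.le
      (hEcont.mono hsub1)
    · intro x hx
      have hx' : x ∈ Set.Icc tb tc := Set.Ioo_subset_Icc_self hx
      exact ((hd1 x hx').hasDerivAt (Icc_mem_nhds hx.1 hx.2)).hasDerivWithinAt
    · exact hF.intervalIntegrable _ _
  -- Phase 2: integral of F on [tc, tb+1]
  have hB : (∫ τ in tc..(tb + 1), F τ) = G (tb + 1) - G tc := by
    apply intervalIntegral.integral_eq_sub_of_hasDeriv_right_of_le h2.le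
    · exact (hEcont.mono hsub2).sub
        (((hEcont.mono hsub2).pow 2).div_const _)
    · intro x hx
      have hx' : x ∈ Set.Icc tc (tb + 1) := Set.Ioo_subset_Icc_self hx
      obtain ⟨d, hd, heq⟩ := hd2 x hx'
      have hdx : HasDerivAt E d x := hd.hasDerivAt (Icc_mem_nhds hx.1 hx.2)
      have hGd : HasDerivAt G (d - 2 * E x * d / (2 * ζ)) x := by
        have : HasDerivAt (fun τ => (E τ) ^ 2) (2 * E x * d) x := by
          have := hdx.fun_pow 2
          simpa [mul_comm, mul_assoc, mul_left_comm] using this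
        exact hdx.sub (this.div_const _)
      have hval : d - 2 * E x * d / (2 * ζ) = F x := by
        field_simp
        nlinarith [heq]
      rw [hval] at hGd
      exact hGd.hasDerivWithinAt
    · exact hF.intervalIntegrable _ _
  -- E tc in terms of E tb and the integral
  have hEc : E tb + (∫ τ in tb..tc, F τ) = E tc := by rw [hA]; ring
  -- split integral over the full period
  have hsplit : (∫ τ in tb..tc, F τ) + (∫ τ in tc..(tb + 1), F τ)
      = ∫ τ in tb..(tb + 1), F τ :=
    intervalIntegral.integral_add_adjacent_intervals
      (hF.intervalIntegrable _ _) (hF.intervalIntegrable _ _)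
  -- periodicity
  have hper' : Function.Periodic F 1 := hper
  have hshift : (∫ τ in (0:ℝ)..1, F τ) = ∫ τ in tb..(tb + 1), F τ := by
    simpa using hper'.intervalIntegral_add_eq 0 tb
  rw [hshift, ← hsplit, hEc]
  have : E (tb + 1) - (E (tb + 1)) ^ 2 / (2 * ζ) = G (tb + 1) := rfl
  rw [this]
  have hGc : G tc = E tc - (E tc) ^ 2 / (2 * ζ) := rfl
  linear_combination -hB - hEc + hGc
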